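/- arXiv:1802.03163 — 4 statements merged into one kernel-verified Lean document; each statement's English description precedes it below -/
import Mathlib

section
/- Let X and E be locally solid Riesz spaces, and suppose X contains an order bounded zero neighborhood. Then every ob-bounded linear operator T : X → E is bb-bounded, i.e., T maps every topologically bounded set of X to a topologically bounded set of E. -/
set_option maxHeartbeats 1000000
open Filter Topology Bornology Set Pointwise

section Defs
variable {E : Type*} [Lattice E] [AddCommGroup E]

/-- A set is solid if `|x| ≤ |y|` and `y ∈ A` imply `x ∈ A`. -/
def IsSolidSet (A : Set E) : Prop := ∀ ⦃x y : E⦄, |x| ≤ |y| → y ∈ A → x ∈ A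

/-- A set is order bounded if it is contained in some order interval `[-a, a]`. -/
def OrdBounded (B : Set E) : Prop := ∃ a : E, B ⊆ Set.Icc (-a) a

end Defs

/-- A locally solid Riesz space: the topology has a base at zero of solid sets. -/
def LocallySolid (E : Type*) [Lattice E] [AddCommGroup E] [TopologicalSpace E] : Prop :=
  ∀ V ∈ 𝓝 (0 : E), ∃ W ∈ 𝓝 (0 : E), W ⊆ V ∧ IsSolidSet W

/-- Triangle-inequality iteration: `|n • y| ≤ n • |y|`. -/
lemma abs_nsmul_le' {G : Type*} [Lattice G] [AddCommGroup G]
    [CovariantClass G G (· + ·) (· ≤ ·)] (n : ℕ) (y : G) : |n • y| ≤ n • |y| := by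
  induction n with
  | zero => simp
  | succ k ih =>
      rw [succ_nsmul, succ_nsmul]
      exact (abs_add_le _ _).trans (add_le_add ih le_rfl)

/-- `n • ·` is monotone. -/
lemma nsmul_mono_right {G : Type*} [AddCommGroup G] [PartialOrder G]
    [CovariantClass G G (· + ·) (· ≤ ·)] (n : ℕ) {b c : G} (h : b ≤ c) :
    n • b ≤ n • c := by
  induction n with
  | zero => simp
  | succ k ih =>
      rw [succ_nsmul, succ_nsmul]
      exact add_le_add ih h

theorem stmt2 {X E : Type*} [Lattice X] [AddCommGroup X] [CovariantClass X X (· + ·) (· ≤ ·)] [Module ℝ X] [TopologicalSpace X] [IsTopologicalAddGroup X] [ContinuousSMul ℝ X] [Lattice E] [AddCommGroup E] [CovariantClass E E (· + ·) (· ≤ ·)] [Module ℝ E] [TopologicalSpace E] [IsTopologicalAddGroup E] [ContinuousSMul ℝ E]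
    (hX : LocallySolid X) (hE : LocallySolid E)
    (hnbhd : ∃ V ∈ 𝓝 (0 : X), OrdBounded V)
    (T : X →ₗ[ℝ] E)
    (hT : ∀ B : Set X, OrdBounded B → IsVonNBounded ℝ (T '' B)) :
    ∀ B : Set X, IsVonNBounded ℝ B → IsVonNBounded ℝ (T '' B) := by
  intro B hB
  obtain ⟨V, hV, a, hVa⟩ := hnbhd
  obtain ⟨r, hr, hc⟩ := (hB hV).exists_pos
  obtain ⟨n, hn⟩ := exists_nat_ge r
  have hsub : B ⊆ ((n : ℝ)) • V := hc _ (by simpa using hn.trans (le_abs_self _))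
  have hBsub : B ⊆ Set.Icc (-(n • a)) (n • a) := by
    intro x hx
    obtain ⟨y, hy, rfl⟩ := hsub hx
    have hy' : y ∈ Set.Icc (-a) a := hVa hy
    have hya : |y| ≤ a := abs_le'.2 ⟨hy'.2, neg_le.mp hy'.1⟩
    have h1 : |(n : ℝ) • y| ≤ n • a := by
      rw [Nat.cast_smul_eq_nsmul ℝ n y]
      calc |n • y| ≤ n • |y| := abs_nsmul_le' n y
        _ ≤ n • a := nsmul_mono_right n hya
    exact ⟨le_trans (neg_le_neg_iff.mpr h1) (neg_le.mp (neg_le_abs _)), (le_abs_self _).trans h1⟩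
  exact (hT _ ⟨n • a, Set.Subset.rfl⟩).subset (Set.image_mono hBsub)
end

section
/- Let (E, τ) be a locally solid Riesz space with an order bounded zero neighborhood. If nets (T_α) and (S_α) of ob-bounded linear operators E → E both converge to zero uniformly on order bounded sets, then the net of compositions (S_α ∘ T_α) converges to zero uniformly on order bounded sets. -/
open Filter Topology Bornology Set

theorem stmt8 {E : Type*} [Lattice E] [AddCommGroup E] [CovariantClass E E (· + ·) (· ≤ ·)] [Module ℝ E] [TopologicalSpace E] [IsTopologicalAddGroup E] [ContinuousSMul ℝ E]
    (hE : LocallySolid E)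
    (hnbhd : ∃ V ∈ 𝓝 (0 : E), OrdBounded V)
    {ι : Type*} [Nonempty ι] [SemilatticeSup ι]
    (T S : ι → E →ₗ[ℝ] E)
    (hTob : ∀ α, ∀ B : Set E, OrdBounded B → IsVonNBounded ℝ (T α '' B))
    (hSob : ∀ α, ∀ B : Set E, OrdBounded B → IsVonNBounded ℝ (S α '' B))
    (hT : ∀ B : Set E, OrdBounded B → ∀ V ∈ 𝓝 (0 : E),
      ∃ α₀ : ι, ∀ α ≥ α₀, ∀ x ∈ B, T α x ∈ V)
    (hS : ∀ B : Set E, OrdBounded B → ∀ V ∈ 𝓝 (0 : E),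
      ∃ α₀ : ι, ∀ α ≥ α₀, ∀ x ∈ B, S α x ∈ V) :
    ∀ B : Set E, OrdBounded B → ∀ V ∈ 𝓝 (0 : E),
      ∃ α₀ : ι, ∀ α ≥ α₀, ∀ x ∈ B, (S α ∘ₗ T α) x ∈ V := by
  intro B hB V hV
  obtain ⟨V₀, hV₀, a, haV₀⟩ := hnbhd
  obtain ⟨α₁, hα₁⟩ := hS (Set.Icc (-a) a) ⟨a, subset_rfl⟩ V hV
  obtain ⟨α₂, hα₂⟩ := hT B hB V₀ hV₀
  refine ⟨α₁ ⊔ α₂, fun α hα x hx => ?_⟩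
  exact hα₁ α (le_trans le_sup_left hα) _ (haV₀ (hα₂ α (le_trans le_sup_right hα) x hx))
end

section
/- Let X be a vector lattice and E an order complete locally solid Riesz space with an order bounded zero neighborhood. If nets (T_α), (S_α) of ob-bounded operators converge uniformly on order bounded sets to linear operators T and S respectively, then (T_α ∨ S_α) converges uniformly on order bounded sets to T ∨ S, where the supremum is given by the Riesz–Kantorovich formula (T ∨ S)(x) = sup{Tu + Sv : u, v ≥ 0, u + v = x} for x ≥ 0. -/
open Filter Topology Bornology Set

/-- In a lattice-ordered group, `0 ≤ 2^k • a` implies `0 ≤ a`. -/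
lemma aux_semiclosed {E : Type*} [Lattice E] [AddCommGroup E]
    [CovariantClass E E (· + ·) (· ≤ ·)] :
    ∀ (k : ℕ) (a : E), 0 ≤ 2 ^ k • a → 0 ≤ a := by
  intro k
  induction k with
  | zero => intro a h; simpa using h
  | succ k ih =>
    intro a h
    apply ih
    apply nsmul_two_semiclosed
    rwa [← mul_nsmul, ← pow_succ]

theorem stmt9 {X E : Type*} [Lattice X] [AddCommGroup X] [CovariantClass X X (· + ·) (· ≤ ·)] [Module ℝ X] [Lattice E] [AddCommGroup E] [CovariantClass E E (· + ·) (· ≤ ·)] [Module ℝ E] [TopologicalSpace E] [IsTopologicalAddGroup E] [ContinuousSMul ℝ E]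
    (hE : LocallySolid E)
    (hcomplete : ∀ A : Set E, A.Nonempty → BddAbove A → ∃ b, IsLUB A b)
    (hnbhd : ∃ V ∈ 𝓝 (0 : E), OrdBounded V)
    {ι : Type*} [Nonempty ι] [SemilatticeSup ι]
    (T S : ι → X →ₗ[ℝ] E) (Tl Sl : X →ₗ[ℝ] E)
    (hTob : ∀ α, ∀ B : Set X, OrdBounded B → IsVonNBounded ℝ (T α '' B))
    (hSob : ∀ α, ∀ B : Set X, OrdBounded B → IsVonNBounded ℝ (S α '' B))
    (hT : ∀ B : Set X, OrdBounded B → ∀ V ∈ 𝓝 (0 : E),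
      ∃ α₀ : ι, ∀ α ≥ α₀, ∀ x ∈ B, T α x - Tl x ∈ V)
    (hS : ∀ B : Set X, OrdBounded B → ∀ V ∈ 𝓝 (0 : E),
      ∃ α₀ : ι, ∀ α ≥ α₀, ∀ x ∈ B, S α x - Sl x ∈ V)
    -- the pointwise suprema given by the Riesz–Kantorovich formula
    (P : ι → X → E) (Pl : X → E)
    (hP : ∀ α, ∀ x : X, 0 ≤ x →
      IsLUB {y : E | ∃ u v : X, 0 ≤ u ∧ 0 ≤ v ∧ u + v = x ∧ y = T α u + S α v} (P α x))
    (hPl : ∀ x : X, 0 ≤ x →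
      IsLUB {y : E | ∃ u v : X, 0 ≤ u ∧ 0 ≤ v ∧ u + v = x ∧ y = Tl u + Sl v} (Pl x)) :
    ∀ B : Set X, OrdBounded B → ∀ V ∈ 𝓝 (0 : E),
      ∃ α₀ : ι, ∀ α ≥ α₀, ∀ x ∈ B, 0 ≤ x → P α x - Pl x ∈ V := by
  intro B hB V hV
  obtain ⟨a, haB⟩ := hB
  obtain ⟨W, hW, hWV, hWsolid⟩ := hE V hV
  obtain ⟨V₀, hV₀, e, heV₀⟩ := hnbhd
  -- choose k such that b := 2·(2^k)⁻¹ • e lies in W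
  have h1 : Tendsto (fun k : ℕ => ((2:ℝ) ^ k)⁻¹) atTop (𝓝 0) := by
    simpa [inv_pow] using
      tendsto_pow_atTop_nhds_zero_of_lt_one (by norm_num : (0:ℝ) ≤ 2⁻¹)
        (by norm_num : (2:ℝ)⁻¹ < 1)
  have h2 : Tendsto (fun k : ℕ => ((2:ℝ) ^ k)⁻¹ • e) atTop (𝓝 (0:E)) := by
    simpa using h1.smul_const e
  have h3 : Tendsto (fun k : ℕ => ((2:ℝ) ^ k)⁻¹ • e + ((2:ℝ) ^ k)⁻¹ • e) atTop (𝓝 (0:E)) := by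
    simpa using h2.add h2
  obtain ⟨k, hk⟩ := (h3.eventually_mem hW).exists
  set ek : E := ((2:ℝ) ^ k)⁻¹ • e with hek
  set b : E := ek + ek with hbdef
  have hb : b ∈ W := hk
  have hpow : ((2:ℝ) ^ k) ≠ 0 := by positivity
  have hcast : ∀ w : E, (2 ^ k : ℕ) • w = ((2:ℝ) ^ k) • w := by
    intro w
    rw [← Nat.cast_smul_eq_nsmul ℝ]
    norm_num
  have hsmulek : ((2:ℝ) ^ k) • ek = e := by
    rw [hek, smul_smul, mul_inv_cancel₀ hpow, one_smul]
  -- the key order bound from membership in V₀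
  have key : ∀ z : E, ((2:ℝ) ^ k) • z ∈ V₀ → -ek ≤ z ∧ z ≤ ek := by
    intro z hz
    have hzI := heV₀ hz
    constructor
    · have h0 : (0:E) ≤ 2 ^ k • (z + ek) := by
        rw [hcast, smul_add, hsmulek]
        calc (0:E) = -e + e := by abel
        _ ≤ ((2:ℝ) ^ k) • z + e := add_le_add_left hzI.1 e
      have := aux_semiclosed k _ h0
      rw [← sub_nonneg, sub_neg_eq_add]
      exact this
    · have h0 : (0:E) ≤ 2 ^ k • (ek - z) := by
        rw [hcast, smul_sub, hsmulek, sub_nonneg]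
        exact hzI.2
      have := aux_semiclosed k _ h0
      rwa [sub_nonneg] at this
  -- the neighborhood for the convergence hypotheses
  set U : Set E := (fun z : E => ((2:ℝ) ^ k) • z) ⁻¹' V₀ with hUdef
  have hU : U ∈ 𝓝 (0 : E) := by
    have hc : Continuous fun z : E => ((2:ℝ) ^ k) • z := continuous_const_smul _
    have := hc.continuousAt (x := (0:E))
    rw [ContinuousAt, smul_zero] at this
    exact this hV₀
  have hIcc : OrdBounded (Icc (-a) a) := ⟨a, subset_rfl⟩
  obtain ⟨α₁, hα₁⟩ := hT (Icc (-a) a) hIcc U hU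
  obtain ⟨α₂, hα₂⟩ := hS (Icc (-a) a) hIcc U hU
  refine ⟨α₁ ⊔ α₂, fun α hα x hxB hx0 => ?_⟩
  have hxa : x ∈ Icc (-a) a := haB hxB
  have hα₁' := fun u hu => hα₁ α (le_trans le_sup_left hα) u hu
  have hα₂' := fun u hu => hα₂ α (le_trans le_sup_right hα) u hu
  -- decompositions lie in Icc (-a) a
  have hmem : ∀ u v : X, 0 ≤ u → 0 ≤ v → u + v = x → u ∈ Icc (-a) a ∧ v ∈ Icc (-a) a := by
    intro u v hu hv huv
    have hna : -a ≤ (0:X) := neg_nonpos.mpr (le_trans hx0 hxa.2)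
    have hux : u ≤ x := by
      rw [← huv]; simpa using add_le_add_left hv u
    have hvx : v ≤ x := by
      rw [← huv]; calc v ≤ u + v := by simpa using add_le_add_right hu v
      _ = u + v := rfl
    exact ⟨⟨le_trans hna hu, le_trans hux hxa.2⟩, ⟨le_trans hna hv, le_trans hvx hxa.2⟩⟩
  -- bound 1 : P α x ≤ Pl x + b
  have hbd1 : P α x ≤ Pl x + b := by
    apply (hP α x hx0).2
    rintro y ⟨u, v, hu, hv, huv, rfl⟩
    obtain ⟨huI, hvI⟩ := hmem u v hu hv huv
    have ht := key _ (hα₁' u huI)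
    have hs := key _ (hα₂' v hvI)
    have hTl : Tl u + Sl v ≤ Pl x := (hPl x hx0).1 ⟨u, v, hu, hv, huv, rfl⟩
    have heq : T α u + S α v = (Tl u + Sl v) + ((T α u - Tl u) + (S α v - Sl v)) := by abel
    rw [heq, hbdef]
    exact add_le_add hTl (add_le_add ht.2 hs.2)
  -- bound 2 : Pl x ≤ P α x + b
  have hbd2 : Pl x ≤ P α x + b := by
    apply (hPl x hx0).2
    rintro y ⟨u, v, hu, hv, huv, rfl⟩
    obtain ⟨huI, hvI⟩ := hmem u v hu hv huv
    have ht := key _ (hα₁' u huI)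
    have hs := key _ (hα₂' v hvI)
    have hTα : T α u + S α v ≤ P α x := (hP α x hx0).1 ⟨u, v, hu, hv, huv, rfl⟩
    have heq : Tl u + Sl v = (T α u + S α v) + (-(T α u - Tl u) + -(S α v - Sl v)) := by abel
    have ht' : -(T α u - Tl u) ≤ ek := neg_le.mpr ht.1
    have hs' : -(S α v - Sl v) ≤ ek := neg_le.mpr hs.1
    rw [heq, hbdef]
    exact add_le_add hTα (add_le_add ht' hs')
  -- conclude via solidity
  have habs : |P α x - Pl x| ≤ |b| := by
    have h1' : P α x - Pl x ≤ b := sub_le_iff_le_add'.mpr hbd1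
    have h2' : -(P α x - Pl x) ≤ b := by
      have : Pl x - P α x ≤ b := sub_le_iff_le_add'.mpr hbd2
      simpa using this
    exact le_trans (abs_le'.mpr ⟨h1', h2'⟩) (le_abs_self b)
  exact hWV (hWsolid habs hb)
end

section
/- Let X be a vector lattice and E a locally solid Riesz space. Suppose (T_α) is a net of ob-bounded linear operators X → E that is uniformly Cauchy on order bounded sets, E is topologically complete, and some order bounded set B ⊆ X is absorbing. Then there exists a linear operator T : X → E such that T_α(x) → T(x) for every x ∈ X, (T_α) converges to T uniformly on order bounded sets, and T is ob-bounded. -/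
open Filter Topology Bornology Set

open scoped Pointwise

theorem stmt13 {X E : Type*} [Lattice X] [AddCommGroup X] [CovariantClass X X (· + ·) (· ≤ ·)] [Module ℝ X] [Lattice E] [AddCommGroup E] [CovariantClass E E (· + ·) (· ≤ ·)] [Module ℝ E]
    [UniformSpace E] [IsUniformAddGroup E] [ContinuousSMul ℝ E] [CompleteSpace E]
    (hE : LocallySolid E)
    {ι : Type*} [Nonempty ι] [SemilatticeSup ι]
    (T : ι → X →ₗ[ℝ] E)
    (hTob : ∀ α, ∀ B : Set X, OrdBounded B → IsVonNBounded ℝ (T α '' B))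
    (hcauchy : ∀ B : Set X, OrdBounded B → ∀ V ∈ 𝓝 (0 : E),
      ∃ α₀ : ι, ∀ α ≥ α₀, ∀ β ≥ α₀, ∀ x ∈ B, T α x - T β x ∈ V)
    (B₀ : Set X) (hB₀ : OrdBounded B₀) (habs : Absorbent ℝ B₀) :
    ∃ Tl : X →ₗ[ℝ] E,
      (∀ x : X, Tendsto (fun α => T α x) atTop (𝓝 (Tl x))) ∧
      (∀ B : Set X, OrdBounded B → ∀ V ∈ 𝓝 (0 : E),
        ∃ α₀ : ι, ∀ α ≥ α₀, ∀ x ∈ B, T α x - Tl x ∈ V) ∧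
      (∀ B : Set X, OrdBounded B → IsVonNBounded ℝ (Tl '' B)) := by
  classical
  -- singletons are order bounded
  have hsx : ∀ x : X, OrdBounded ({x} : Set X) := by
    intro x
    refine ⟨|x|, fun y hy => ?_⟩
    rw [Set.mem_singleton_iff] at hy
    subst hy
    refine ⟨?_, le_abs_self y⟩
    have h1 : -y ≤ |y| := neg_le_abs y
    exact neg_le.mp h1
  -- pointwise limits exist
  have hlim : ∀ x : X, ∃ e : E, Tendsto (fun α => T α x) atTop (𝓝 e) := by
    intro x
    have hc : CauchySeq (fun α => T α x) := by
      rw [cauchySeq_iff_tendsto, uniformity_eq_comap_nhds_zero E, tendsto_comap_iff]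
      have : Tendsto (fun p : ι × ι => T p.2 x - T p.1 x) atTop (𝓝 (0 : E)) := by
        rw [tendsto_def]
        intro s hs
        obtain ⟨α₀, hα₀⟩ := hcauchy {x} (hsx x) s hs
        filter_upwards [Filter.eventually_ge_atTop (α₀, α₀)] with p hp
        exact hα₀ p.2 hp.2 p.1 hp.1 x rfl
      simpa [Function.comp_def, Prod.map] using this
    exact cauchySeq_tendsto_of_complete hc
  choose L hL using hlim
  -- the closure of zero and a complement
  set N : Submodule ℝ E := (⊥ : Submodule ℝ E).topologicalClosure with hNdef
  have hNset : (N : Set E) = closure ({0} : Set E) := by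
    rw [hNdef, Submodule.topologicalClosure_coe, Submodule.bot_coe]
  obtain ⟨C, hC⟩ := Submodule.exists_isCompl N
  let π : E →ₗ[ℝ] E := C.subtype.comp (C.linearProjOfIsCompl N hC.symm)
  have hπ0 : ∀ n ∈ N, π n = 0 := fun n hn => by
    simp [π]; exact Submodule.projectionOnto_apply_of_mem_right hC.symm hn
  have hπsub : ∀ a : E, a - π a ∈ N := by
    intro a
    have h := Submodule.projection_add_projection_eq_self hC a
    have h2 : a - π a = ((N.linearProjOfIsCompl C hC a : E)) := by
      exact (eq_sub_of_add_eq h).symm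
    rw [h2]
    exact (N.linearProjOfIsCompl C hC a).2
  -- two limits of the same net differ by an element of N
  have hmemN : ∀ {u : ι → E} {a b : E}, Tendsto u atTop (𝓝 a) → Tendsto u atTop (𝓝 b) →
      a - b ∈ N := by
    intro u a b ha hb
    have h0 : Tendsto (fun α => u α - u α) atTop (𝓝 (a - b)) := ha.sub hb
    simp only [sub_self] at h0
    have hcl : a - b ∈ closure ({0} : Set E) := by
      rw [mem_closure_iff_nhds]
      intro t ht
      have h2 := h0 ht
      rw [mem_map] at h2
      obtain ⟨α, hα⟩ := Filter.nonempty_of_mem h2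
      exact ⟨0, hα, rfl⟩
    show a - b ∈ (N : Set E)
    rw [hNset]; exact hcl
  have hπeq : ∀ {u : ι → E} {a b : E}, Tendsto u atTop (𝓝 a) → Tendsto u atTop (𝓝 b) →
      π a = π b := by
    intro u a b ha hb
    have := hπ0 _ (hmemN ha hb)
    rw [map_sub] at this
    exact sub_eq_zero.mp this
  -- the limit operator
  let Tl : X →ₗ[ℝ] E :=
    { toFun := fun x => π (L x)
      map_add' := fun x y => by
        have h2 : Tendsto (fun α => T α (x + y)) atTop (𝓝 (L x + L y)) := by
          simpa [map_add] using (hL x).add (hL y)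
        show π (L (x + y)) = π (L x) + π (L y)
        rw [hπeq (hL (x + y)) h2, map_add]
      map_smul' := fun r x => by
        have h2 : Tendsto (fun α => T α (r • x)) atTop (𝓝 (r • L x)) := by
          simpa [map_smul] using (hL x).const_smul r
        show π (L (r • x)) = (RingHom.id ℝ) r • π (L x)
        rw [hπeq (hL (r • x)) h2, map_smul]
        rfl }
  -- points are inseparable from their projections
  have hnhds : ∀ a : E, 𝓝 a = 𝓝 (π a) := by
    intro a
    have h' : a - π a ∈ closure ({0} : Set E) := by
      rw [← hNset]; exact hπsub a
    have : Inseparable a (π a) := by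
      rw [addGroup_inseparable_iff]
      exact h'
    exact this
  have hTend : ∀ x : X, Tendsto (fun α => T α x) atTop (𝓝 (Tl x)) := by
    intro x
    have := hL x
    rwa [hnhds (L x)] at this
  -- uniform convergence on order bounded sets
  have hUnif : ∀ B : Set X, OrdBounded B → ∀ V ∈ 𝓝 (0 : E),
      ∃ α₀ : ι, ∀ α ≥ α₀, ∀ x ∈ B, T α x - Tl x ∈ V := by
    intro B hB V hV
    obtain ⟨V', ⟨hV'mem, hV'closed⟩, hV'sub⟩ := (closed_nhds_basis (0 : E)).mem_iff.mp hV
    obtain ⟨α₀, hα₀⟩ := hcauchy B hB V' hV'mem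
    refine ⟨α₀, fun α hα x hx => ?_⟩
    have h1 : Tendsto (fun β => T α x - T β x) atTop (𝓝 (T α x - Tl x)) :=
      tendsto_const_nhds.sub (hTend x)
    have h2 : ∀ᶠ β in atTop, T α x - T β x ∈ V' :=
      (eventually_ge_atTop α₀).mono fun β hβ => hα₀ α hα β hβ x hx
    exact hV'sub (hV'closed.mem_of_tendsto h1 h2)
  refine ⟨Tl, hTend, hUnif, ?_⟩
  -- ob-boundedness of the limit
  intro B hB V hV
  obtain ⟨W₁, hW₁mem, hW₁⟩ := exists_nhds_zero_half hV
  have hWmem : balancedCore ℝ W₁ ∈ 𝓝 (0 : E) := balancedCore_mem_nhds_zero hW₁mem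
  set W : Set E := balancedCore ℝ W₁ with hWdef
  have hWbal : Balanced ℝ W := balancedCore_balanced W₁
  have hWsub : W ⊆ W₁ := balancedCore_subset W₁
  obtain ⟨α₁, hα₁⟩ := hUnif B hB W hWmem
  have habsorb := hTob α₁ B hB hWmem
  filter_upwards [habsorb, eventually_cobounded_le_norm (1 : ℝ)] with a ha h1
  rintro e ⟨x, hx, rfl⟩
  have h2 : T α₁ x ∈ a • W := ha ⟨x, hx, rfl⟩
  have h3 : T α₁ x - Tl x ∈ W := hα₁ α₁ le_rfl x hx
  have h3' : Tl x - T α₁ x ∈ W := by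
    have hsub : (-1 : ℝ) • W ⊆ W := hWbal (-1) (by simp)
    have := hsub (smul_mem_smul_set h3)
    simpa using this
  have h4 : Tl x - T α₁ x ∈ a • W := hWbal.subset_smul h1 h3'
  obtain ⟨w₁, hw₁, hw₁e⟩ := h2
  obtain ⟨w₂, hw₂, hw₂e⟩ := h4
  have hsum : Tl x = a • (w₁ + w₂) := by
    have hw₁e' : a • w₁ = T α₁ x := hw₁e
    have hw₂e' : a • w₂ = Tl x - T α₁ x := hw₂e
    rw [smul_add, hw₁e', hw₂e']; abel
  rw [hsum]
  exact smul_mem_smul_set (hW₁ _ (hWsub hw₁) _ (hWsub hw₂))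
end
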